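/- Let L/K be an extension of G-graded fields and {A_i} a nonempty collection of graded subrings of K, each integrally closed in K in the graded sense. If B_i denotes the graded integral closure of A_i in L, then ∩_i B_i coincides with the graded integral closure of ∩_i A_i in L. -/

import Mathlib

universe u v

/-- A `G`-graded commutative ring structure on `A`: graded pieces `deg g`,
multiplicativity of the grading, and an internal direct sum decomposition
recorded by the homogeneous-component function `comp`. -/
structure GradedStr (G : Type u) [CommGroup G] (A : Type v) [CommRing A] where
  deg : G → AddSubgroup A
  one_mem : (1 : A) ∈ deg 1
  mul_mem : ∀ {g h : G} {a b : A}, a ∈ deg g → b ∈ deg h → a * b ∈ deg (g * h)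
  comp : A → G → A
  comp_mem : ∀ a g, comp a g ∈ deg g
  comp_add : ∀ a b g, comp (a + b) g = comp a g + comp b g
  comp_of_mem : ∀ {a : A} {g : G}, a ∈ deg g → comp a g = a
  comp_of_mem_ne : ∀ {a : A} {g g' : G}, a ∈ deg g → g' ≠ g → comp a g' = 0
  finite_support : ∀ a : A, (Function.support (comp a)).Finite
  sum_comp : ∀ a : A, ∑ᶠ g, comp a g = a

namespace GradedStr

variable {G : Type u} [CommGroup G] {A : Type v} [CommRing A]

/-- `a` is homogeneous: it lies in some graded piece. -/
def IsHomog (𝒜 : GradedStr G A) (a : A) : Prop := ∃ g, a ∈ 𝒜.deg g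

/-- A `G`-graded field: a nonzero graded ring in which every nonzero homogeneous
element is invertible. -/
def IsGradedField (𝒜 : GradedStr G A) : Prop :=
  Nontrivial A ∧ ∀ a : A, 𝒜.IsHomog a → a ≠ 0 → IsUnit a

/-- A graded subring: a subring stable under taking homogeneous components. -/
def IsGradedSubring (𝒜 : GradedStr G A) (S : Subring A) : Prop :=
  ∀ x ∈ S, ∀ g, 𝒜.comp x g ∈ S

/-- A graded subfield of a graded field: a graded subring containing the inverses of
its nonzero homogeneous elements. -/
def IsGradedSubfield (𝒜 : GradedStr G A) (S : Subring A) : Prop :=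
  𝒜.IsGradedSubring S ∧ ∀ x ∈ S, 𝒜.IsHomog x → x ≠ 0 → Ring.inverse x ∈ S

/-- The additive subgroup of homogeneous polynomials of grading `h` in `K[g₀⁻¹ T]`,
the polynomial ring in which `T` is declared homogeneous of grading `g₀`: the
coefficient of `T^n` must be homogeneous of grading `h * g₀⁻ⁿ`. -/
def polyDeg (𝒜 : GradedStr G A) (g₀ h : G) : AddSubgroup (Polynomial A) where
  carrier := {p | ∀ n : ℕ, p.coeff n ∈ 𝒜.deg (h * (g₀ ^ n)⁻¹)}
  zero_mem' := by intro n; simpa using (𝒜.deg (h * (g₀ ^ n)⁻¹)).zero_mem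
  add_mem' := by
    intro p q hp hq n
    rw [Polynomial.coeff_add]
    exact (𝒜.deg _).add_mem (hp n) (hq n)
  neg_mem' := by
    intro p hp n
    rw [Polynomial.coeff_neg]
    exact (𝒜.deg _).neg_mem (hp n)

/-- A homogeneous polynomial in `K[g₀⁻¹T]`. -/
def IsHomogPoly (𝒜 : GradedStr G A) (g₀ : G) (p : Polynomial A) : Prop :=
  ∃ h, p ∈ 𝒜.polyDeg g₀ h

/-- The graded fraction field of a graded subring of a graded field, computed inside
the ambient graded field: the subring generated by `S` together with the inverses of
the nonzero homogeneous elements of `S`. -/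
def fracIn (𝒜 : GradedStr G A) (S : Subring A) : Subring A :=
  Subring.closure (↑S ∪ {y : A | ∃ x ∈ S, x ≠ 0 ∧ 𝒜.IsHomog x ∧ y = Ring.inverse x})

end GradedStr

/-- `x` is integral over the subring `S` (satisfies a monic polynomial equation with
coefficients in `S`). -/
def IntegralOver {A : Type v} [CommRing A] (S : Subring A) (x : A) : Prop :=
  ∃ p : Polynomial A, p.Monic ∧ (∀ n, p.coeff n ∈ S) ∧ Polynomial.eval x p = 0

/-- Algebraic independence of a family of elements over a subring: the evaluation map
from the (multivariate) polynomial ring is injective.  (For homogeneous elements this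
is graded algebraic independence, the grading playing no role in injectivity.) -/
def AlgIndepOver {A : Type v} [CommRing A] {ι : Type*} (S : Subring A) (T : ι → A) : Prop :=
  Function.Injective (MvPolynomial.eval₂Hom S.subtype T)

/-- A graded valuation ring of the graded subfield `F` of the ambient graded field:
a graded subring `O ⊆ F` such that every nonzero homogeneous element `f` of `F`
satisfies `f ∈ O` or `f⁻¹ ∈ O`. -/
def IsGVRofSubfield {G : Type u} [CommGroup G] {A : Type v} [CommRing A]
    (𝒜 : GradedStr G A) (F : Subring A) (O : Subring A) : Prop :=
  O ≤ F ∧ 𝒜.IsGradedSubring O ∧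
    ∀ f ∈ F, f ≠ 0 → 𝒜.IsHomog f → f ∈ O ∨ Ring.inverse f ∈ O

/-! ### Auxiliary machinery for the proof -/

section AuxIntegral

open Polynomial

/-- `0` is integral over any subring. -/
lemma integralOver_zero {L : Type v} [CommRing L] (S : Subring L) : IntegralOver S (0 : L) :=
  ⟨Polynomial.X, Polynomial.monic_X,
    fun n => by rw [Polynomial.coeff_X]; split_ifs; exacts [S.one_mem, S.zero_mem],
    by rw [Polynomial.eval_X]⟩

/-- Coefficients of a product of linear factors with roots in a subring lie in the subring. -/
lemma coeff_multiset_prod_mem {S : Type v} [CommRing S] (T : Subring S) (m : Multiset S) :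
    (∀ b ∈ m, b ∈ T) →
    ∀ k, ((m.map fun b => Polynomial.X - Polynomial.C b).prod).coeff k ∈ T := by
  induction m using Multiset.induction_on with
  | empty =>
    intro _ k
    rw [Multiset.map_zero, Multiset.prod_zero, Polynomial.coeff_one]
    split_ifs
    exacts [T.one_mem, T.zero_mem]
  | cons a s ih =>
    intro hm k
    have h1 : ∀ i, (Polynomial.X - Polynomial.C a).coeff i ∈ T := by
      intro i
      rw [Polynomial.coeff_sub]
      refine T.sub_mem ?_ ?_
      · rw [Polynomial.coeff_X]; split_ifs; exacts [T.one_mem, T.zero_mem]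
      · rw [Polynomial.coeff_C]; split_ifs
        exacts [hm a (Multiset.mem_cons_self a s), T.zero_mem]
    rw [Multiset.map_cons, Multiset.prod_cons, Polynomial.coeff_mul]
    exact T.sum_mem fun c _ =>
      T.mul_mem (h1 _) (ih (fun b hb => hm b (Multiset.mem_cons_of_mem hb)) _)

/-- A monic polynomial with coefficients in a subring, viewed in the subring, is monic. -/
lemma monic_toSubring_of_monic {S : Type v} [CommRing S] [Nontrivial S] (T : Subring S)
    (p : Polynomial S) (hp : ↑p.coeffs ⊆ (T : Set S)) (hm : p.Monic) :
    (p.toSubring T hp).Monic := by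
  have hle : (p.toSubring T hp).natDegree ≤ p.natDegree := by
    refine Polynomial.natDegree_le_iff_coeff_eq_zero.mpr fun N hN => ?_
    exact ZeroMemClass.coe_eq_zero.mp
      (by rw [Polynomial.coeff_toSubring]; exact Polynomial.coeff_eq_zero_of_natDegree_lt hN)
  have hcd : ((p.toSubring T hp).coeff p.natDegree : S) = 1 := by
    rw [Polynomial.coeff_toSubring]; exact hm
  have hge : p.natDegree ≤ (p.toSubring T hp).natDegree := by
    refine Polynomial.le_natDegree_of_ne_zero fun h => ?_
    rw [h] at hcd
    simp at hcd
  have hdeq : (p.toSubring T hp).natDegree = p.natDegree := le_antisymm hle hge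
  have : ((p.toSubring T hp).leadingCoeff : S) = 1 := by
    rw [Polynomial.leadingCoeff, hdeq]; exact hcd
  refine Subtype.coe_injective ?_
  show ((p.toSubring T hp).leadingCoeff : S) = ((1 : T) : S)
  rw [this, OneMemClass.coe_one]

/-- Coefficients of quotient and remainder by a monic polynomial stay in a subring. -/
lemma coeff_mod_div_mem {L : Type v} [CommRing L] [Nontrivial L] (T : Subring L)
    {p q : Polynomial L} (hq : q.Monic)
    (hp : ∀ n, p.coeff n ∈ T) (hqT : ∀ n, q.coeff n ∈ T) :
    (∀ n, (p %ₘ q).coeff n ∈ T) ∧ (∀ n, (p /ₘ q).coeff n ∈ T) := by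
  have hps : ↑p.coeffs ⊆ (T : Set L) := by
    intro c hc
    obtain ⟨n, _, rfl⟩ := Polynomial.mem_coeffs_iff.mp hc
    exact hp n
  have hqs : ↑q.coeffs ⊆ (T : Set L) := by
    intro c hc
    obtain ⟨n, _, rfl⟩ := Polynomial.mem_coeffs_iff.mp hc
    exact hqT n
  have hq' : (q.toSubring T hqs).Monic := monic_toSubring_of_monic T q hqs hq
  constructor
  · intro n
    have h1 : ((p.toSubring T hps) %ₘ (q.toSubring T hqs)).map T.subtype = p %ₘ q := by
      rw [Polynomial.map_modByMonic T.subtype hq', Polynomial.map_toSubring,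
        Polynomial.map_toSubring]
    rw [← h1, Polynomial.coeff_map]
    exact SetLike.coe_mem _
  · intro n
    have h1 : ((p.toSubring T hps) /ₘ (q.toSubring T hqs)).map T.subtype = p /ₘ q := by
      rw [Polynomial.map_divByMonic T.subtype hq', Polynomial.map_toSubring,
        Polynomial.map_toSubring]
    rw [← h1, Polynomial.coeff_map]
    exact SetLike.coe_mem _

/-- Every monic polynomial splits in some injective (same-universe) extension. -/
lemma exists_split :
    ∀ (n : ℕ) {R : Type v} [CommRing R] (p : Polynomial R), p.Monic → p.natDegree = n →
    ∃ (S : Type v) (_ : CommRing S) (f : R →+* S) (m : Multiset S),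
      Function.Injective ⇑f ∧
        p.map f = (m.map (fun b => Polynomial.X - Polynomial.C b)).prod
  | 0, R, _, p, hp, hdeg =>
    ⟨R, inferInstance, RingHom.id R, 0, fun _ _ h => h, by
      rw [Polynomial.eq_one_of_monic_natDegree_zero hp hdeg]; simp⟩
  | (n+1), R, _, p, hp, hdeg => by
    rcases subsingleton_or_nontrivial R with hR | hR
    · exfalso
      have h0 : p = 0 := Subsingleton.elim _ _
      rw [h0, Polynomial.natDegree_zero] at hdeg
      exact Nat.succ_ne_zero n hdeg.symm
    set f₁ := AdjoinRoot.of p with hf₁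
    set a := AdjoinRoot.root p with ha
    have hinj : Function.Injective ⇑f₁ := by
      rw [injective_iff_map_eq_zero]
      intro c hc
      have hmk : AdjoinRoot.mk p (Polynomial.C c) = 0 := hc
      obtain ⟨u, hu⟩ := AdjoinRoot.mk_eq_zero.mp hmk
      by_contra hc0
      have hu0 : u ≠ 0 := by
        rintro rfl
        rw [mul_zero] at hu
        exact hc0 (Polynomial.C_eq_zero.mp hu)
      have hnd := Polynomial.Monic.natDegree_mul' hp hu0
      rw [← hu, Polynomial.natDegree_C, hdeg] at hnd
      omega
    haveI : Nontrivial (AdjoinRoot p) :=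
      ⟨⟨f₁ 0, f₁ 1, fun h => zero_ne_one (hinj h)⟩⟩
    have hroot : (p.map f₁).IsRoot a := by
      show (p.map f₁).eval a = 0
      rw [Polynomial.eval_map]
      exact AdjoinRoot.eval₂_root p
    set q₁ := (p.map f₁) /ₘ (Polynomial.X - Polynomial.C a) with hq₁def
    have hfac : p.map f₁ = (Polynomial.X - Polynomial.C a) * q₁ :=
      (Polynomial.mul_divByMonic_eq_iff_isRoot.mpr hroot).symm
    have hq₁m : q₁.Monic :=
      Polynomial.Monic.of_mul_monic_left (Polynomial.monic_X_sub_C a)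
        (by rw [← hfac]; exact hp.map f₁)
    have hq₁d : q₁.natDegree = n := by
      have h1 : (p.map f₁).natDegree = n + 1 := by rw [hp.natDegree_map f₁, hdeg]
      have h2 : (p.map f₁).natDegree = 1 + q₁.natDegree := by
        rw [hfac, (Polynomial.monic_X_sub_C a).natDegree_mul' hq₁m.ne_zero,
          Polynomial.natDegree_X_sub_C]
      omega
    obtain ⟨S, instS, f₂, m, hinj₂, hsplit⟩ := exists_split n q₁ hq₁m hq₁d
    refine ⟨S, instS, f₂.comp f₁, f₂ a ::ₘ m, hinj₂.comp hinj, ?_⟩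
    rw [← Polynomial.map_map, hfac, Polynomial.map_mul, Polynomial.map_sub,
      Polynomial.map_X, Polynomial.map_C, hsplit, Multiset.map_cons, Multiset.prod_cons]

end AuxIntegral

namespace GradedStr

variable {G : Type u} [CommGroup G] {L : Type v} [CommRing L]

lemma comp_zero' (ℬ : GradedStr G L) (g : G) : ℬ.comp 0 g = 0 := by
  have h := ℬ.comp_add 0 0 g
  rw [add_zero] at h
  exact left_eq_add.mp h

/-- `comp · g` as an additive monoid hom. -/
def compHom (ℬ : GradedStr G L) (g : G) : L →+ L where
  toFun a := ℬ.comp a g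
  map_zero' := ℬ.comp_zero' g
  map_add' a b := ℬ.comp_add a b g

lemma comp_finset_sum (ℬ : GradedStr G L) {ι' : Type*} (s : Finset ι') (f : ι' → L) (g : G) :
    ℬ.comp (∑ k ∈ s, f k) g = ∑ k ∈ s, ℬ.comp (f k) g :=
  map_sum (ℬ.compHom g) f s

lemma comp_sum_homog (ℬ : GradedStr G L) {ι' : Type*} [DecidableEq G] (s : Finset ι')
    (f : ι' → L) (dgr : ι' → G) (hf : ∀ k ∈ s, f k ∈ ℬ.deg (dgr k)) (h : G) :
    ℬ.comp (∑ k ∈ s, f k) h = ∑ k ∈ s, if h = dgr k then f k else 0 := by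
  rw [ℬ.comp_finset_sum]
  refine Finset.sum_congr rfl fun k hk => ?_
  by_cases hcase : h = dgr k
  · rw [if_pos hcase, hcase, ℬ.comp_of_mem (hf k hk)]
  · rw [if_neg hcase, ℬ.comp_of_mem_ne (hf k hk) hcase]

lemma comp_mul_homog (ℬ : GradedStr G L) {u : L} {g' : G} (hu : u ∈ ℬ.deg g') (a : L) (h : G) :
    ℬ.comp (a * u) h = ℬ.comp a (h * g'⁻¹) * u := by
  classical
  set s : Finset G := (ℬ.finite_support a).toFinset with hs
  have ha : a = ∑ k ∈ s, ℬ.comp a k := by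
    rw [← finsum_eq_sum_of_support_subset (fun k => ℬ.comp a k) (by simp [hs])]
    exact (ℬ.sum_comp a).symm
  have key : ℬ.comp (a * u) h = ∑ k ∈ s, if h = k * g' then ℬ.comp a k * u else 0 := by
    conv_lhs => rw [ha, Finset.sum_mul]
    exact ℬ.comp_sum_homog s (fun k => ℬ.comp a k * u) (fun k => k * g')
      (fun k _ => ℬ.mul_mem (ℬ.comp_mem a k) hu) h
  rw [key]
  have step : ∀ k ∈ s, (if h = k * g' then ℬ.comp a k * u else 0)
      = (if k = h * g'⁻¹ then ℬ.comp a k * u else 0) := by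
    intro k _
    by_cases hc : k = h * g'⁻¹
    · rw [if_pos hc, if_pos (by rw [hc, inv_mul_cancel_right])]
    · rw [if_neg hc, if_neg (fun e => hc (by rw [e, mul_inv_cancel_right]))]
  rw [Finset.sum_congr rfl step, Finset.sum_ite_eq' s (h * g'⁻¹) _]
  by_cases hmem : h * g'⁻¹ ∈ s
  · rw [if_pos hmem]
  · rw [if_neg hmem]
    have h0 : ℬ.comp a (h * g'⁻¹) = 0 := by
      by_contra hne
      exact hmem ((ℬ.finite_support a).mem_toFinset.mpr hne)
    rw [h0, zero_mul]

lemma pow_mem_deg (ℬ : GradedStr G L) {x : L} {g : G} (hx : x ∈ ℬ.deg g) (n : ℕ) :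
    x ^ n ∈ ℬ.deg (g ^ n) := by
  induction n with
  | zero => simpa using ℬ.one_mem
  | succ n ih => rw [pow_succ, pow_succ]; exact ℬ.mul_mem ih hx

lemma inverse_mem_deg (ℬ : GradedStr G L) {a : L} {k : G} (ha : a ∈ ℬ.deg k)
    (hu : IsUnit a) : Ring.inverse a ∈ ℬ.deg k⁻¹ := by
  set b := Ring.inverse a with hb
  have hba : b * a = 1 := Ring.inverse_mul_cancel a hu
  have hz : ∀ m, m ≠ k⁻¹ → ℬ.comp b m = 0 := by
    intro m hm
    have h1 : ℬ.comp (b * a) (m * k) = ℬ.comp b (m * k * k⁻¹) * a := ℬ.comp_mul_homog ha b (m * k)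
    rw [hba, mul_inv_cancel_right] at h1
    have h2 : ℬ.comp (1 : L) (m * k) = 0 :=
      ℬ.comp_of_mem_ne ℬ.one_mem (fun e => hm (eq_inv_of_mul_eq_one_left e))
    rw [h1] at h2
    calc ℬ.comp b m = ℬ.comp b m * (a * Ring.inverse a) := by
          rw [Ring.mul_inverse_cancel a hu, mul_one]
      _ = (ℬ.comp b m * a) * Ring.inverse a := by ring
      _ = 0 := by rw [h2, zero_mul]
  have hbk : b = ℬ.comp b k⁻¹ := (ℬ.sum_comp b).symm.trans (finsum_eq_single _ _ hz)
  rw [hbk]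
  exact ℬ.comp_mem b k⁻¹

/-- The homogeneous component of grading `h` of a polynomial, the variable having
grading `g`. -/
noncomputable def pcomp (ℬ : GradedStr G L) (g : G) (p : Polynomial L) (h : G) : Polynomial L :=
  ∑ n ∈ p.support, Polynomial.C (ℬ.comp (p.coeff n) (h * (g ^ n)⁻¹)) * Polynomial.X ^ n

lemma pcomp_coeff (ℬ : GradedStr G L) (g : G) (p : Polynomial L) (h : G) (m : ℕ) :
    (ℬ.pcomp g p h).coeff m = ℬ.comp (p.coeff m) (h * (g ^ m)⁻¹) := by
  classical
  rw [pcomp, Polynomial.finset_sum_coeff]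
  have step : ∀ n ∈ p.support,
      (Polynomial.C (ℬ.comp (p.coeff n) (h * (g ^ n)⁻¹)) * Polynomial.X ^ n).coeff m
      = if n = m then ℬ.comp (p.coeff n) (h * (g ^ n)⁻¹) else 0 := by
    intro n _
    rw [Polynomial.coeff_C_mul, Polynomial.coeff_X_pow]
    by_cases hnm : n = m
    · rw [if_pos (hnm ▸ rfl), if_pos hnm, mul_one]
    · rw [if_neg (fun e => hnm e.symm), if_neg hnm, mul_zero]
  rw [Finset.sum_congr rfl step, Finset.sum_ite_eq' p.support m _]
  by_cases hm : m ∈ p.support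
  · rw [if_pos hm]
  · rw [if_neg hm, Polynomial.notMem_support_iff.mp hm, ℬ.comp_zero']

lemma pcomp_natDegree_le (ℬ : GradedStr G L) (g : G) (p : Polynomial L) (h : G) :
    (ℬ.pcomp g p h).natDegree ≤ p.natDegree := by
  refine Polynomial.natDegree_le_iff_coeff_eq_zero.mpr fun N hN => ?_
  rw [ℬ.pcomp_coeff, Polynomial.coeff_eq_zero_of_natDegree_lt hN, ℬ.comp_zero']

lemma comp_eval (ℬ : GradedStr G L) {x : L} {g : G} (hx : x ∈ ℬ.deg g)
    (p : Polynomial L) (h : G) :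
    ℬ.comp (p.eval x) h = (ℬ.pcomp g p h).eval x := by
  classical
  rw [Polynomial.eval_eq_sum, Polynomial.sum_def, ℬ.comp_finset_sum, pcomp,
    Polynomial.eval_finset_sum]
  refine Finset.sum_congr rfl fun n _ => ?_
  rw [Polynomial.eval_mul, Polynomial.eval_C, Polynomial.eval_pow, Polynomial.eval_X]
  exact ℬ.comp_mul_homog (ℬ.pow_mem_deg hx n) (p.coeff n) h

end GradedStr

/-- Making a polynomial monic from the data of its top coefficients. -/
lemma monic_natDegree_of_coeff {L : Type v} [CommRing L] [Nontrivial L]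
    {p : Polynomial L} {e : ℕ} (h1 : p.coeff e = 1) (h2 : ∀ n, e < n → p.coeff n = 0) :
    p.Monic ∧ p.natDegree = e := by
  have hle : p.natDegree ≤ e := Polynomial.natDegree_le_iff_coeff_eq_zero.mpr h2
  have hge : e ≤ p.natDegree :=
    Polynomial.le_natDegree_of_ne_zero (by rw [h1]; exact one_ne_zero)
  have hdeg : p.natDegree = e := le_antisymm hle hge
  exact ⟨by rw [Polynomial.Monic, Polynomial.leadingCoeff, hdeg, h1], hdeg⟩

open Polynomial in
/-- **Kronecker's lemma.** If `p` is monic with coefficients in a subring `A` and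
`p = q * s` with `q` monic, then every coefficient of `q` is integral over `A`. -/
lemma integralOver_coeff_of_monic_factor {L : Type v} [CommRing L]
    {A : Subring L} {p q s : Polynomial L}
    (hpA : ∀ n, p.coeff n ∈ A) (hpm : p.Monic) (hqm : q.Monic) (hps : p = q * s) :
    ∀ n, IntegralOver A (q.coeff n) := by
  obtain ⟨S, instS, f, m, hinj, hsplit⟩ := exists_split q.natDegree q hqm rfl
  set A' : Subring S := A.map f with hA'
  set T : Subring S := (integralClosure A' S).toSubring with hT
  -- every element of `m` is a root of `q.map f`, hence of `p.map f`, hence integral over `A'`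
  rcases subsingleton_or_nontrivial S with hS | hS
  · -- if `S` is trivial then `L` is trivial too, and everything is integral
    haveI : Subsingleton L := ⟨fun a b => hinj (Subsingleton.elim _ _)⟩
    intro n
    exact ⟨Polynomial.X, Polynomial.monic_X,
      fun k => by rw [Polynomial.coeff_X]; split_ifs; exacts [A.one_mem, A.zero_mem],
      Subsingleton.elim _ _⟩
  have hroot_int : ∀ b ∈ m, b ∈ T := by
    intro b hb
    have hqb : (q.map f).eval b = 0 := by
      rw [hsplit, Polynomial.eval_multiset_prod]
      apply Multiset.prod_eq_zero
      rw [Multiset.map_map]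
      exact Multiset.mem_map.mpr ⟨b, hb, by simp⟩
    have hpb : (p.map f).eval b = 0 := by
      rw [hps, Polynomial.map_mul, Polynomial.eval_mul, hqb, zero_mul]
    have hcs : ↑(p.map f).coeffs ⊆ (A' : Set S) := by
      intro c hc
      obtain ⟨k, _, rfl⟩ := Polynomial.mem_coeffs_iff.mp hc
      rw [Polynomial.coeff_map]
      exact Subring.mem_map.mpr ⟨p.coeff k, hpA k, rfl⟩
    refine Subalgebra.mem_toSubring.mpr ?_
    refine ⟨(p.map f).toSubring A' hcs, monic_toSubring_of_monic A' (p.map f) hcs (hpm.map f), ?_⟩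
    have : algebraMap A' S = A'.subtype := rfl
    rw [this, Polynomial.eval₂_eq_eval_map, Polynomial.map_toSubring]
    exact hpb
  intro n
  -- `f (q.coeff n)` lies in `T`
  have hfq : f (q.coeff n) ∈ T := by
    rw [← Polynomial.coeff_map, hsplit]
    exact coeff_multiset_prod_mem T m hroot_int n
  have hInt : IsIntegral A' (f (q.coeff n)) := Subalgebra.mem_toSubring.mp hfq
  obtain ⟨P, hPm, hPev⟩ := hInt
  set e := A.equivMapOfInjective f hinj with he
  set Q : Polynomial L := (P.map e.symm.toRingHom).map A.subtype with hQ
  have hcomp : (f.comp A.subtype).comp e.symm.toRingHom = A'.subtype := by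
    ext a'
    show f ((e.symm a' : A) : L) = (a' : S)
    have := A.coe_equivMapOfInjective_apply f hinj (e.symm a')
    rw [RingEquiv.apply_symm_apply] at this
    exact this.symm
  have hQmap : Q.map f = P.map A'.subtype := by
    rw [hQ, Polynomial.map_map, Polynomial.map_map, hcomp]
  refine ⟨Q, (hPm.map e.symm.toRingHom).map A.subtype, fun k => ?_, ?_⟩
  · rw [hQ, Polynomial.coeff_map]
    exact SetLike.coe_mem _
  · have h0 : f (Q.eval (q.coeff n)) = 0 := by
      rw [← Polynomial.eval₂_at_apply, Polynomial.eval₂_eq_eval_map, hQmap,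
        ← Polynomial.eval₂_eq_eval_map]
      exact hPev
    exact (injective_iff_map_eq_zero f).mp hinj _ h0

open Polynomial in
/-- The key homogeneous case: a homogeneous element integral over every `A i`
is integral over `⨅ i, A i`. -/
lemma main_homog_integral
    {G : Type u} [CommGroup G] {L : Type v} [CommRing L]
    (ℬ : GradedStr G L) (hL : ℬ.IsGradedField)
    (K : Subring L) (hK : ℬ.IsGradedSubfield K)
    {ι : Type v} [Nonempty ι] (A : ι → Subring L)
    (hAK : ∀ i, A i ≤ K)
    (hAgr : ∀ i, ℬ.IsGradedSubring (A i))
    (hAic : ∀ i, ∀ z ∈ K, (∀ g, IntegralOver (A i) (ℬ.comp z g)) → z ∈ A i)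
    {x : L} {g : G} (hx : x ∈ ℬ.deg g) (hint : ∀ i, IntegralOver (A i) x) :
    IntegralOver (⨅ i, A i) x := by
  classical
  haveI : Nontrivial L := hL.1
  by_cases hx0 : x = 0
  · rw [hx0]; exact integralOver_zero _
  obtain ⟨i₀⟩ := ‹Nonempty ι›
  -- the set of degrees of monic homogeneous polynomials over `K` vanishing at `x`
  set SS : Set ℕ := {d | ∃ q : Polynomial L, q.Monic ∧ q.natDegree = d ∧
      (∀ n, q.coeff n ∈ K) ∧ (∀ n, q.coeff n ∈ ℬ.deg (g ^ d * (g ^ n)⁻¹)) ∧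
      q.eval x = 0} with hSS
  have hne : SS.Nonempty := by
    obtain ⟨p, hpm, hpA, hpev⟩ := hint i₀
    set d := p.natDegree with hd
    set q := ℬ.pcomp g p (g ^ d) with hq
    have h1 : q.coeff d = 1 := by
      rw [hq, ℬ.pcomp_coeff, mul_inv_cancel, show p.coeff d = 1 from hpm, ℬ.comp_of_mem ℬ.one_mem]
    have h2 : ∀ n, d < n → q.coeff n = 0 := fun n hn => by
      rw [hq, ℬ.pcomp_coeff, Polynomial.coeff_eq_zero_of_natDegree_lt hn, ℬ.comp_zero']
    obtain ⟨hqm, hqd⟩ := monic_natDegree_of_coeff h1 h2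
    refine ⟨d, q, hqm, hqd, ?_, ?_, ?_⟩
    · intro n
      rw [hq, ℬ.pcomp_coeff]
      exact hAK i₀ ((hAgr i₀) _ (hpA n) _)
    · intro n
      rw [hq, ℬ.pcomp_coeff]
      exact ℬ.comp_mem _ _
    · rw [hq, ← ℬ.comp_eval hx, hpev, ℬ.comp_zero']
  set d := sInf SS with hd
  obtain ⟨q, hqm, hqd, hqK, hqdeg, hqev⟩ := Nat.sInf_mem hne
  -- minimality: homogeneous polynomials over `K` of degree `< d` vanishing at `x` are `0`
  have hmin : ∀ (h : G) (r : Polynomial L), (∀ n, r.coeff n ∈ K) →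
      (∀ n, r.coeff n ∈ ℬ.deg (h * (g ^ n)⁻¹)) → r.natDegree < d → r.eval x = 0 → r = 0 := by
    intro h r hrK hrdeg hrd hrev
    by_contra hr0
    set e := r.natDegree with hee
    have hlc : r.leadingCoeff ≠ 0 := fun hc => hr0 (Polynomial.leadingCoeff_eq_zero.mp hc)
    have hc0 : r.coeff e ≠ 0 := hlc
    have hhom : r.coeff e ∈ ℬ.deg (h * (g ^ e)⁻¹) := hrdeg e
    have hu : IsUnit (r.coeff e) := hL.2 _ ⟨_, hhom⟩ hc0
    set c := Ring.inverse (r.coeff e) with hc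
    have hcK : c ∈ K := hK.2 _ (hrK e) ⟨_, hhom⟩ hc0
    have hcdeg : c ∈ ℬ.deg (h * (g ^ e)⁻¹)⁻¹ := ℬ.inverse_mem_deg hhom hu
    set q' := Polynomial.C c * r with hq'
    have hq'c : ∀ n, q'.coeff n = c * r.coeff n := fun n => Polynomial.coeff_C_mul r
    have h1 : q'.coeff e = 1 := by rw [hq'c, hc]; exact Ring.inverse_mul_cancel _ hu
    have h2 : ∀ n, e < n → q'.coeff n = 0 := fun n hn => by
      rw [hq'c, Polynomial.coeff_eq_zero_of_natDegree_lt hn, mul_zero]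
    obtain ⟨hq'm, hq'd⟩ := monic_natDegree_of_coeff h1 h2
    have hmem : e ∈ SS := by
      refine ⟨q', hq'm, hq'd, fun n => by rw [hq'c]; exact K.mul_mem hcK (hrK n),
        fun n => ?_, by rw [hq', Polynomial.eval_mul, Polynomial.eval_C, hrev, mul_zero]⟩
      rw [hq'c]
      have harg : (h * (g ^ e)⁻¹)⁻¹ * (h * (g ^ n)⁻¹) = g ^ e * (g ^ n)⁻¹ := by group
      exact harg ▸ ℬ.mul_mem hcdeg (hrdeg n)
    have := Nat.sInf_le hmem
    omega
  -- each integrality witness over `A i` is divisible by `q`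
  have hqin : ∀ n, q.coeff n ∈ ⨅ i, A i := by
    intro n
    refine Subring.mem_iInf.mpr fun i => ?_
    obtain ⟨p, hpm, hpA, hpev⟩ := hint i
    set r := p %ₘ q with hr
    have hrK : ∀ k, r.coeff k ∈ K :=
      (coeff_mod_div_mem K hqm (fun k => hAK i (hpA k)) hqK).1
    have hrev : r.eval x = 0 := by
      have hdecomp := Polynomial.modByMonic_add_div p q
      have := congrArg (Polynomial.eval x) hdecomp
      rw [Polynomial.eval_add, Polynomial.eval_mul, hqev, zero_mul, add_zero, hpev] at this
      exact this
    have hr0 : r = 0 := by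
      by_cases hrz : r = 0
      · exact hrz
      have hdr : r.natDegree < d := by
        have h1 := Polynomial.degree_modByMonic_lt p hqm
        have h2 := Polynomial.natDegree_lt_natDegree hrz h1
        rwa [hqd] at h2
      apply Polynomial.ext
      intro k
      rw [Polynomial.coeff_zero]
      have hpczero : ∀ h, ℬ.pcomp g r h = 0 := by
        intro h
        refine hmin h (ℬ.pcomp g r h) (fun n => by rw [ℬ.pcomp_coeff]; exact hK.1 _ (hrK n) _)
          (fun n => by rw [ℬ.pcomp_coeff]; exact ℬ.comp_mem _ _)
          (lt_of_le_of_lt (ℬ.pcomp_natDegree_le g r h) hdr) ?_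
        rw [← ℬ.comp_eval hx, hrev, ℬ.comp_zero']
      have hallzero : ∀ m, ℬ.comp (r.coeff k) m = 0 := by
        intro m
        have := congrArg (fun t => Polynomial.coeff t k) (hpczero (m * g ^ k))
        simp only [Polynomial.coeff_zero] at this
        rw [ℬ.pcomp_coeff, mul_inv_cancel_right] at this
        exact this
      calc r.coeff k = ∑ᶠ m, ℬ.comp (r.coeff k) m := (ℬ.sum_comp _).symm
        _ = 0 := by rw [funext hallzero]; exact finsum_zero
    have hfac : p = q * (p /ₘ q) := by
      have hdecomp := Polynomial.modByMonic_add_div p q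
      rw [← hr, hr0, zero_add] at hdecomp
      exact hdecomp.symm
    have hint_coeff := integralOver_coeff_of_monic_factor hpA hpm hqm hfac n
    refine hAic i (q.coeff n) (hqK n) fun g' => ?_
    by_cases hg' : g' = g ^ d * (g ^ n)⁻¹
    · rw [hg', ℬ.comp_of_mem (hqdeg n)]
      exact hint_coeff
    · rw [ℬ.comp_of_mem_ne (hqdeg n) hg']
      exact integralOver_zero _
  exact ⟨q, hqm, hqin, hqev⟩

/-- Let `L/K` be an extension of `G`-graded fields (realized as a
graded subfield `K` of the graded field `L`) and `{A_i}` a nonempty collection of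
graded subrings of `K`, each integrally closed in `K` in the graded sense.  If `B_i`
denotes the graded integral closure of `A_i` in `L` (the set of elements all of whose
homogeneous components are integral over `A_i`), then `⋂ B_i` coincides with the
graded integral closure of `⋂ A_i` in `L`. -/
theorem inter_graded_integral_closures
    {G : Type u} [CommGroup G] {L : Type v} [CommRing L]
    (ℬ : GradedStr G L) (hL : ℬ.IsGradedField)
    (K : Subring L) (hK : ℬ.IsGradedSubfield K)
    {ι : Type v} [Nonempty ι] (A : ι → Subring L)
    (hAK : ∀ i, A i ≤ K)
    (hAgr : ∀ i, ℬ.IsGradedSubring (A i))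
    (hAic : ∀ i, ∀ z ∈ K, (∀ g, IntegralOver (A i) (ℬ.comp z g)) → z ∈ A i) :
    (⋂ i, {z : L | ∀ g, IntegralOver (A i) (ℬ.comp z g)})
      = {z : L | ∀ g, IntegralOver (⨅ i, A i) (ℬ.comp z g)} := by
  ext z
  simp only [Set.mem_iInter, Set.mem_setOf_eq]
  constructor
  · intro hz g
    exact main_homog_integral ℬ hL K hK A hAK hAgr hAic (ℬ.comp_mem z g) (fun i => hz i g)
  · intro hz i g
    obtain ⟨p, hpm, hpc, hpe⟩ := hz g
    exact ⟨p, hpm, fun n => (iInf_le A i : (⨅ j, A j) ≤ A i) (hpc n), hpe⟩
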